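/- Let k have characteristic 3. The tensor product L_3 ⊗ L_2 decomposes as a direct sum of two submodules each isomorphic to L_3, generated respectively by v_1⊗w_1 and v_2⊗w_1. -/
import Mathlib

open TensorProduct

/-- The nilpotent Jordan block action `t` on `L_n = k^n`: `t·v_j = v_{j+1}`, `t·v_n = 0`
(indices shifted so that `v_j` is the basis vector at index `j-1`). -/
noncomputable def jordanT (k : Type*) [Field k] (n : ℕ) : (Fin n → k) →ₗ[k] (Fin n → k) :=
  Matrix.mulVecLin (Matrix.of fun i j : Fin n => if (i : ℕ) = (j : ℕ) + 1 then (1 : k) else 0)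

/-- The Leibniz-rule action of `t` on `L_a ⊗ L_b`: `t·(v⊗w) = (t·v)⊗w + v⊗(t·w)`. -/
noncomputable def tensorT (k : Type*) [Field k] (a b : ℕ) :
    ((Fin a → k) ⊗[k] (Fin b → k)) →ₗ[k] ((Fin a → k) ⊗[k] (Fin b → k)) :=
  LinearMap.rTensor (Fin b → k) (jordanT k a) + LinearMap.lTensor (Fin a → k) (jordanT k b)

/-- The cyclic submodule generated by `u` under the operator `T`. -/
noncomputable def cyclic {k : Type*} [Field k] {V : Type*} [AddCommGroup V] [Module k V]
    (T : V →ₗ[k] V) (u : V) : Submodule k V :=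
  Submodule.span k (Set.range fun j : ℕ => (T ^ j) u)

section Aux
variable (k : Type*) [Field k]

lemma jordanT3_0 : jordanT k 3 (Pi.single 0 1) = Pi.single 1 1 := by
  ext i; fin_cases i <;>
    simp [jordanT, Matrix.mulVecLin, Matrix.mulVec, dotProduct,
      Fin.sum_univ_succ, Pi.single_apply]

lemma jordanT3_1 : jordanT k 3 (Pi.single 1 1) = Pi.single 2 1 := by
  ext i; fin_cases i <;>
    simp [jordanT, Matrix.mulVecLin, Matrix.mulVec, dotProduct,
      Fin.sum_univ_succ, Pi.single_apply]

lemma jordanT3_2 : jordanT k 3 (Pi.single 2 1) = 0 := by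
  ext i; fin_cases i <;>
    simp [jordanT, Matrix.mulVecLin, Matrix.mulVec, dotProduct,
      Fin.sum_univ_succ, Pi.single_apply]

lemma jordanT2_0 : jordanT k 2 (Pi.single 0 1) = Pi.single 1 1 := by
  ext i; fin_cases i <;>
    simp [jordanT, Matrix.mulVecLin, Matrix.mulVec, dotProduct,
      Fin.sum_univ_succ, Pi.single_apply]

lemma jordanT2_1 : jordanT k 2 (Pi.single 1 1) = 0 := by
  ext i; fin_cases i <;>
    simp [jordanT, Matrix.mulVecLin, Matrix.mulVec, dotProduct,
      Fin.sum_univ_succ, Pi.single_apply]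

lemma tensorT_tmul (a b : ℕ) (x : Fin a → k) (y : Fin b → k) :
    tensorT k a b (x ⊗ₜ y) = jordanT k a x ⊗ₜ y + x ⊗ₜ jordanT k b y := by
  simp [tensorT]

lemma cyclic_eq_span {V : Type*} [AddCommGroup V] [Module k V]
    (T : V →ₗ[k] V) (u : V) (h3 : T (T (T u)) = 0) :
    cyclic T u = Submodule.span k {u, T u, T (T u)} := by
  have e3 : (T ^ 3) u = 0 := by
    simp only [pow_succ, pow_zero, Module.End.mul_apply, Module.End.one_apply]; exact h3
  apply le_antisymm
  · rw [cyclic, Submodule.span_le]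
    rintro _ ⟨j, rfl⟩
    match j with
    | 0 => exact Submodule.subset_span (by simp)
    | 1 => exact Submodule.subset_span (by simp [pow_one])
    | 2 => refine Submodule.subset_span ?_
           simp only [pow_succ, pow_zero, Module.End.mul_apply, Module.End.one_apply]
           simp
    | (n+3) =>
      have : (T ^ (n+3)) u = (T ^ n) ((T ^ 3) u) := by
        rw [pow_add]; rfl
      show (T ^ (n+3)) u ∈ _
      rw [this, e3, map_zero]
      exact Submodule.zero_mem _
  · rw [Submodule.span_le]
    rintro x hx
    simp only [Set.mem_insert_iff, Set.mem_singleton_iff] at hx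
    rcases hx with rfl | rfl | rfl
    · exact Submodule.subset_span ⟨0, by simp⟩
    · exact Submodule.subset_span ⟨1, by simp [pow_one]⟩
    · refine Submodule.subset_span ⟨2, ?_⟩
      simp only [pow_succ, pow_zero, Module.End.mul_apply, Module.End.one_apply]

end Aux

set_option maxHeartbeats 2000000 in
/-- For `char k = 3`, `L_3 ⊗ L_2` decomposes as a direct sum of two submodules each
isomorphic to `L_3`, generated respectively by `v_1⊗w_1` and `v_2⊗w_1`. -/
theorem stmt8 {k : Type*} [Field k] [CharP k 3] :
    let T := tensorT k 3 2
    let v : Fin 3 → (Fin 3 → k) := fun i => Pi.single i 1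
    let w : Fin 2 → (Fin 2 → k) := fun i => Pi.single i 1
    let S₁ := cyclic T (v 0 ⊗ₜ[k] w 0)
    let S₂ := cyclic T (v 1 ⊗ₜ[k] w 0)
    Module.finrank k S₁ = 3 ∧ Module.finrank k S₂ = 3 ∧
    Disjoint S₁ S₂ ∧ S₁ ⊔ S₂ = ⊤ := by
  intro T v w S₁ S₂
  classical
  have hc3 : (3 : k) = 0 := by exact_mod_cast CharP.cast_eq_zero k 3
  have h22 : (2 : k) * 2 = 1 := by linear_combination hc3
  set E : Fin 3 → Fin 2 → ((Fin 3 → k) ⊗[k] (Fin 2 → k)) :=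
    fun i j => Pi.single i 1 ⊗ₜ Pi.single j 1 with hE
  have h00 : T (E 0 0) = E 1 0 + E 0 1 := by
    simp only [hE, T, tensorT_tmul, jordanT3_0, jordanT2_0]
  have h10 : T (E 1 0) = E 2 0 + E 1 1 := by
    simp only [hE, T, tensorT_tmul, jordanT3_1, jordanT2_0]
  have h20 : T (E 2 0) = E 2 1 := by
    simp only [hE, T, tensorT_tmul, jordanT3_2, jordanT2_0, zero_tmul, zero_add]
  have h01 : T (E 0 1) = E 1 1 := by
    simp only [hE, T, tensorT_tmul, jordanT3_0, jordanT2_1, tmul_zero, add_zero]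
  have h11 : T (E 1 1) = E 2 1 := by
    simp only [hE, T, tensorT_tmul, jordanT3_1, jordanT2_1, tmul_zero, add_zero]
  have h21 : T (E 2 1) = 0 := by
    simp only [hE, T, tensorT_tmul, jordanT3_2, jordanT2_1, tmul_zero, zero_tmul, add_zero]
  -- second iterates
  have hTT1 : T (T (E 0 0)) = E 2 0 + (2 : k) • E 1 1 := by
    rw [h00, map_add, h10, h01]; module
  have hTT2 : T (T (E 1 0)) = (2 : k) • E 2 1 := by
    rw [h10, map_add, h20, h11]; module
  -- third iterates vanish
  have hT3_1 : T (T (T (E 0 0))) = 0 := by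
    rw [hTT1, map_add, map_smul, h20, h11]
    have : E 2 1 + (2 : k) • E 2 1 = (3 : k) • E 2 1 := by module
    rw [this, hc3, zero_smul]
  have hT3_2 : T (T (T (E 1 0))) = 0 := by
    rw [hTT2, map_smul, h21, smul_zero]
  -- span descriptions
  have hS1 : S₁ = Submodule.span k {E 0 0, E 1 0 + E 0 1, E 2 0 + (2 : k) • E 1 1} := by
    have := cyclic_eq_span k T (E 0 0) hT3_1
    rw [show S₁ = cyclic T (E 0 0) from rfl, this, hTT1, h00]
  have hS2 : S₂ = Submodule.span k {E 1 0, E 2 0 + E 1 1, (2 : k) • E 2 1} := by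
    have := cyclic_eq_span k T (E 1 0) hT3_2
    rw [show S₂ = cyclic T (E 1 0) from rfl, this, hTT2, h10]
  -- generators membership
  have g1 : E 0 0 ∈ S₁ := hS1 ▸ Submodule.subset_span (by simp)
  have g2 : E 1 0 + E 0 1 ∈ S₁ := hS1 ▸ Submodule.subset_span (by simp)
  have g3 : E 2 0 + (2 : k) • E 1 1 ∈ S₁ := hS1 ▸ Submodule.subset_span (by simp)
  have g4 : E 1 0 ∈ S₂ := hS2 ▸ Submodule.subset_span (by simp)
  have g5 : E 2 0 + E 1 1 ∈ S₂ := hS2 ▸ Submodule.subset_span (by simp)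
  have g6 : (2 : k) • E 2 1 ∈ S₂ := hS2 ▸ Submodule.subset_span (by simp)
  -- every basis vector lies in the sup
  have m00 : E 0 0 ∈ S₁ ⊔ S₂ := Submodule.mem_sup_left g1
  have m10 : E 1 0 ∈ S₁ ⊔ S₂ := Submodule.mem_sup_right g4
  have m01 : E 0 1 ∈ S₁ ⊔ S₂ := by
    have := sub_mem (Submodule.mem_sup_left g2) m10
    have heq : (E 1 0 + E 0 1) - E 1 0 = E 0 1 := by module
    rwa [heq] at this
  have m11 : E 1 1 ∈ S₁ ⊔ S₂ := by
    have := sub_mem (Submodule.mem_sup_left g3) (Submodule.mem_sup_right g5)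
    have heq : (E 2 0 + (2 : k) • E 1 1) - (E 2 0 + E 1 1) = E 1 1 := by module
    rwa [heq] at this
  have m20 : E 2 0 ∈ S₁ ⊔ S₂ := by
    have := sub_mem (Submodule.mem_sup_right g5) m11
    have heq : (E 2 0 + E 1 1) - E 1 1 = E 2 0 := by module
    rwa [heq] at this
  have m21 : E 2 1 ∈ S₁ ⊔ S₂ := by
    have := (S₁ ⊔ S₂).smul_mem (2 : k) (Submodule.mem_sup_right g6)
    rwa [smul_smul, h22, one_smul] at this
  -- sup is everything
  have hsup : S₁ ⊔ S₂ = ⊤ := by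
    rw [eq_top_iff]
    have hb := ((Pi.basisFun k (Fin 3)).tensorProduct (Pi.basisFun k (Fin 2))).span_eq
    rw [← hb, Submodule.span_le]
    rintro _ ⟨⟨i, j⟩, rfl⟩
    rw [Module.Basis.tensorProduct_apply]
    have hBi : Pi.basisFun k (Fin 3) i = Pi.single i 1 := by
      simp [Pi.basisFun_apply]
    have hBj : Pi.basisFun k (Fin 2) j = Pi.single j 1 := by
      simp [Pi.basisFun_apply]
    rw [hBi, hBj]
    fin_cases i <;> fin_cases j <;> assumption
  -- rank counting
  have hM6 : Module.finrank k ((Fin 3 → k) ⊗[k] (Fin 2 → k)) = 6 := by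
    rw [Module.finrank_tensorProduct]; simp
  have hr1 : Module.finrank k S₁ ≤ 3 := by
    rw [hS1]
    refine le_trans (finrank_span_le_card _) ?_
    rw [Set.toFinset_insert, Set.toFinset_insert, Set.toFinset_singleton]
    refine le_trans (Finset.card_insert_le _ _) ?_
    refine le_trans (Nat.add_le_add_right (Finset.card_insert_le _ _) 1) ?_
    simp
  have hr2 : Module.finrank k S₂ ≤ 3 := by
    rw [hS2]
    refine le_trans (finrank_span_le_card _) ?_
    rw [Set.toFinset_insert, Set.toFinset_insert, Set.toFinset_singleton]
    refine le_trans (Finset.card_insert_le _ _) ?_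
    refine le_trans (Nat.add_le_add_right (Finset.card_insert_le _ _) 1) ?_
    simp
  have hkey := Submodule.finrank_sup_add_finrank_inf_eq S₁ S₂
  rw [hsup, finrank_top, hM6] at hkey
  have hinf0 : Module.finrank k ↥(S₁ ⊓ S₂) = 0 := by omega
  have hfr1 : Module.finrank k S₁ = 3 := by omega
  have hfr2 : Module.finrank k S₂ = 3 := by omega
  refine ⟨hfr1, hfr2, ?_, hsup⟩
  rw [disjoint_iff]
  exact Submodule.finrank_eq_zero.mp hinf0
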